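/- Let N be a normal subgroup of a finite group C, let χ be a complex irreducible character of N, and let e_ℚ(χ) = (1/|N|) Σ_{σ ∈ Gal(ℚ(χ)/ℚ)} Σ_{n ∈ N} σ(χ(n)) n^{-1} be the primitive central idempotent of ℚN associated to χ. Suppose x ∈ C centralizes e_ℚ(χ) and there is a unit u of the algebra ℚN e_ℚ(χ) such that x α x^{-1} = u α u^{-1} for all α ∈ ℚN e_ℚ(χ). Then the conjugate character χ^x, defined by χ^x(n) = χ(x n x^{-1}), equals χ. -/

import Mathlib

open scoped Classical
set_option linter.unusedSectionVars false

noncomputable section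

namespace PaperGSM

variable {G : Type} [Group G] [Fintype G]

/-- `Ĥ = (1/|N|) ∑_{x ∈ N} x` in the rational group algebra. -/
def hat (N : Subgroup G) : MonoidAlgebra ℚ G :=
  (Nat.card N : ℚ)⁻¹ • ∑ x : N, MonoidAlgebra.of ℚ G (x : G)

/-- conjugation of `X` by `y`, as an equivalence of the subtype. -/
def conjEquiv (X : Subgroup G) (y : G) (h : ∀ x ∈ X, y⁻¹ * x * y ∈ X)
    (h' : ∀ x ∈ X, y * x * y⁻¹ ∈ X) : X ≃ X where
  toFun x := ⟨y⁻¹ * x * y, h x x.2⟩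
  invFun x := ⟨y * x * y⁻¹, h' x x.2⟩
  left_inv x := Subtype.ext (by group)
  right_inv x := Subtype.ext (by group)

lemma sum_conj_eq (X : Subgroup G) (y : G) (h : ∀ x ∈ X, y⁻¹ * x * y ∈ X)
    (h' : ∀ x ∈ X, y * x * y⁻¹ ∈ X) :
    ∑ x : X, MonoidAlgebra.of ℚ G ((x : G) * y)
      = ∑ x : X, MonoidAlgebra.of ℚ G (y * (x : G)) := by
  apply Fintype.sum_equiv (conjEquiv X y h h')
  intro x
  have : (x : G) * y = y * ((conjEquiv X y h h') x : G) := by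
    simp only [conjEquiv, Equiv.coe_fn_mk]
    group
  rw [this]

lemma hat_comm (X Y : Subgroup G) (h : ∀ y ∈ Y, ∀ x ∈ X, y⁻¹ * x * y ∈ X) :
    hat X * hat Y = hat Y * hat X := by
  have key : (∑ x : X, MonoidAlgebra.of ℚ G (x : G)) * (∑ y : Y, MonoidAlgebra.of ℚ G (y : G))
      = (∑ y : Y, MonoidAlgebra.of ℚ G (y : G)) * (∑ x : X, MonoidAlgebra.of ℚ G (x : G)) := by
    rw [Finset.sum_mul_sum, Finset.sum_mul_sum]
    have l : ∀ (x : X) (y : Y),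
        MonoidAlgebra.of ℚ G (x : G) * MonoidAlgebra.of ℚ G (y : G)
          = MonoidAlgebra.of ℚ G ((x : G) * (y : G)) := fun x y => (map_mul _ _ _).symm
    calc ∑ x : X, ∑ y : Y, MonoidAlgebra.of ℚ G (x : G) * MonoidAlgebra.of ℚ G (y : G)
        = ∑ y : Y, ∑ x : X, MonoidAlgebra.of ℚ G ((x : G) * (y : G)) := by
          rw [Finset.sum_comm]
          exact Finset.sum_congr rfl fun y _ => Finset.sum_congr rfl fun x _ => l x y
      _ = ∑ y : Y, ∑ x : X, MonoidAlgebra.of ℚ G ((y : G) * (x : G)) := by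
          refine Finset.sum_congr rfl fun y _ => ?_
          refine sum_conj_eq X (y : G) (fun x hx => h y y.2 x hx) (fun x hx => ?_)
          have := h (y : G)⁻¹ (Y.inv_mem y.2) x hx
          simpa using this
      _ = ∑ y : Y, ∑ x : X, MonoidAlgebra.of ℚ G (y : G) * MonoidAlgebra.of ℚ G (x : G) := by
          exact Finset.sum_congr rfl fun y _ => Finset.sum_congr rfl fun x _ => map_mul (MonoidAlgebra.of ℚ G) _ _
  unfold hat
  rw [smul_mul_smul_comm, smul_mul_smul_comm, key, mul_comm ((Nat.card X : ℚ)⁻¹)]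

instance : Fintype (Subgroup G) :=
  Fintype.ofInjective (fun H : Subgroup G => (H : Set G)) fun _ _ h => SetLike.coe_injective h

/-- `N` is a normal subgroup of `B` (both given as subgroups of the ambient group `G`). -/
def NormalIn (N B : Subgroup G) : Prop :=
  N ≤ B ∧ ∀ b ∈ B, ∀ x ∈ N, b * x * b⁻¹ ∈ N

/-- `L` is a minimal normal subgroup of `H` containing `K` properly. -/
def IsMinNormalOver (H K L : Subgroup G) : Prop :=
  NormalIn L H ∧ K < L ∧ ∀ M : Subgroup G, NormalIn M H → K < M → M ≤ L → M = L

/-- `ε(H,K)`. -/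
def eps (H K : Subgroup G) : MonoidAlgebra ℚ G :=
  if H = K then hat K
  else Finset.noncommProd (Finset.univ.filter (IsMinNormalOver H K))
    (fun L => hat K - hat L) (by
      intro L hL M hM _
      simp only [Finset.coe_filter, Set.mem_setOf_eq, Finset.mem_univ, true_and] at hL hM
      have hKL : K ≤ L := le_of_lt hL.2.1
      have hKH : K ≤ H := hKL.trans hL.1.1
      have normconj : ∀ (A : Subgroup G), NormalIn A H → ∀ y ∈ K, ∀ x ∈ A, y⁻¹ * x * y ∈ A := by
        intro A hA y hy x hx
        have := hA.2 y⁻¹ (H.inv_mem (hKH hy)) x hx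
        simpa using this
      have cKK : Commute (hat K) (hat K) := Commute.refl _
      have cKL : Commute (hat K) (hat L) :=
        (hat_comm L K (normconj L hL.1)).symm
      have cKM : Commute (hat K) (hat M) :=
        (hat_comm M K (normconj M hM.1)).symm
      have cLM : Commute (hat L) (hat M) := by
        refine hat_comm L M ?_
        intro y hy x hx
        have := hL.1.2 y⁻¹ (H.inv_mem (hM.1.1 hy)) x hx
        simpa using this
      exact (cKK.sub_right cKM).sub_left (cKL.symm.sub_right cLM))

/-- conjugation of an element of the group algebra by a group element. -/
def conjEl (g : G) (α : MonoidAlgebra ℚ G) : MonoidAlgebra ℚ G :=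
  MonoidAlgebra.of ℚ G g * α * MonoidAlgebra.of ℚ G g⁻¹

/-- `e(B,H,K)`: the sum of the distinct `B`-conjugates of `ε(H,K)`. -/
def eGHK (B H K : Subgroup G) : MonoidAlgebra ℚ G :=
  ∑ a ∈ Finset.image (fun b : B => conjEl (b : G) (eps H K)) Finset.univ, a


/-- linear extension of a character to the rational group algebra, valued in `ℂ`. -/
def extChar {Γ : Type*} [Group Γ] [Fintype Γ] (χ : Γ → ℂ) (α : MonoidAlgebra ℚ Γ) : ℂ :=
  ∑ g : Γ, (α.coeff g : ℂ) * χ g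

/-- `e` is a primitive central idempotent of the rational group algebra. -/
def IsPCI {Γ : Type*} [Group Γ] (e : MonoidAlgebra ℚ Γ) : Prop :=
  (∀ α, e * α = α * e) ∧ e * e = e ∧ e ≠ 0 ∧
    ∀ a b : MonoidAlgebra ℚ Γ, (∀ α, a * α = α * a) → (∀ α, b * α = α * b) →
      a * a = a → b * b = b → a * b = 0 → a + b = e → a = 0 ∨ b = 0

/-- `e_ℚ(χ)`: the primitive central idempotent of `ℚΓ` associated to the irreducible
character `χ`, i.e. the unique primitive central idempotent on which `χ` does not vanish. -/
def eQchar {Γ : Type*} [Group Γ] [Fintype Γ] (χ : Γ → ℂ) : MonoidAlgebra ℚ Γ :=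
  if h : ∃ e, IsPCI e ∧ extChar χ e ≠ 0 then h.choose else 0

/-- the embedding `ℚB → ℚG` for a subgroup `B` of `G`. -/
def emb (B : Subgroup G) : MonoidAlgebra ℚ B →+* MonoidAlgebra ℚ G :=
  MonoidAlgebra.mapDomainRingHom ℚ B.subtype

/-- the induced character `χ^Γ` of a character `χ` of a subgroup `N` of `Γ`. -/
def indChar {Γ : Type*} [Group Γ] [Fintype Γ] (N : Subgroup Γ) (χ : N → ℂ) : Γ → ℂ :=
  fun g => (Nat.card N : ℂ)⁻¹ * ∑ x : Γ, if h : x * g * x⁻¹ ∈ N then χ ⟨x * g * x⁻¹, h⟩ else 0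

/-- `λ` is a linear character of `H` with kernel `K`. -/
def IsLinCharKer (H K : Subgroup G) (lam : H →* ℂ) : Prop :=
  K ≤ H ∧ ∀ h : H, lam h = 1 ↔ (h : G) ∈ K

/-- given a linear character `lam` of `H ≤ G` and `H ≤ B`, the induced character `λ^B`
of the subgroup `B`. -/
def lamChar {H : Subgroup G} (lam : H →* ℂ) (B : Subgroup G) : B → ℂ :=
  indChar (H.subgroupOf B) (fun y => lam ⟨((y : B) : G), y.2⟩)

/-- `e_ℚ(λ^B)` viewed as an element of `ℚG`. -/
def eQ {H : Subgroup G} (lam : H →* ℂ) (B : Subgroup G) : MonoidAlgebra ℚ G :=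
  emb B (eQchar (lamChar lam B))

/-- `Cen_B(e)`: the centralizer of an element `e` of `ℚG` inside the subgroup `B`. -/
def cen (B : Subgroup G) (e : MonoidAlgebra ℚ G) : Subgroup G where
  carrier := {g | g ∈ B ∧ MonoidAlgebra.of ℚ G g * e = e * MonoidAlgebra.of ℚ G g}
  one_mem' := ⟨B.one_mem, by rw [map_one, one_mul, mul_one]⟩
  mul_mem' := by
    rintro a b ⟨haB, ha⟩ ⟨hbB, hb⟩
    refine ⟨B.mul_mem haB hbB, ?_⟩
    rw [map_mul, mul_assoc, hb, ← mul_assoc, ha, mul_assoc]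
  inv_mem' := by
    rintro a ⟨haB, ha⟩
    refine ⟨B.inv_mem haB, ?_⟩
    have h2 : MonoidAlgebra.of ℚ G a * MonoidAlgebra.of ℚ G a⁻¹ = 1 := by
      rw [← map_mul, mul_inv_cancel, map_one]
    have h1 : MonoidAlgebra.of ℚ G a⁻¹ * MonoidAlgebra.of ℚ G a = 1 := by
      rw [← map_mul, inv_mul_cancel, map_one]
    have hu : Commute ((Units.mk (MonoidAlgebra.of ℚ G a)
        (MonoidAlgebra.of ℚ G a⁻¹) h2 h1 : (MonoidAlgebra ℚ G)ˣ) : MonoidAlgebra ℚ G) e := ha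
    exact hu.units_inv_left

/-- the component `ℚB·e` of the group algebra, as a non-unital subring of `ℚG`. -/
def compIn (B : Subgroup G) (e : MonoidAlgebra ℚ G) : NonUnitalSubring (MonoidAlgebra ℚ G) :=
  NonUnitalSubring.closure (Set.range fun β : MonoidAlgebra ℚ B => emb B β * e)

/-- the center of the component `ℚB·e`, as a non-unital subring of `ℚG`. -/
def centerCompNUS (B : Subgroup G) (e : MonoidAlgebra ℚ G) :
    NonUnitalSubring (MonoidAlgebra ℚ G) where
  carrier := {α | α ∈ compIn B e ∧ ∀ γ ∈ compIn B e, α * γ = γ * α}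
  zero_mem' := ⟨zero_mem _, fun γ _ => by rw [zero_mul, mul_zero]⟩
  add_mem' := by
    rintro a b ⟨ha, ha'⟩ ⟨hb, hb'⟩
    exact ⟨add_mem ha hb, fun γ hγ => by rw [add_mul, mul_add, ha' γ hγ, hb' γ hγ]⟩
  neg_mem' := by
    rintro a ⟨ha, ha'⟩
    exact ⟨neg_mem ha, fun γ hγ => by rw [neg_mul, mul_neg, ha' γ hγ]⟩
  mul_mem' := by
    rintro a b ⟨ha, ha'⟩ ⟨hb, hb'⟩
    refine ⟨mul_mem ha hb, fun γ hγ => ?_⟩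
    rw [mul_assoc, hb' γ hγ, ← mul_assoc, ha' γ hγ, mul_assoc]

lemma conjEl_add (g : G) (α β : MonoidAlgebra ℚ G) :
    conjEl g (α + β) = conjEl g α + conjEl g β := by
  unfold conjEl; rw [mul_add, add_mul]

lemma conjEl_mul (g : G) (α β : MonoidAlgebra ℚ G) :
    conjEl g (α * β) = conjEl g α * conjEl g β := by
  unfold conjEl
  have h1 : MonoidAlgebra.of ℚ G g⁻¹ * MonoidAlgebra.of ℚ G g = 1 := by
    rw [← map_mul, inv_mul_cancel, map_one]
  calc MonoidAlgebra.of ℚ G g * (α * β) * MonoidAlgebra.of ℚ G g⁻¹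
      = MonoidAlgebra.of ℚ G g * α * ((MonoidAlgebra.of ℚ G g⁻¹ * MonoidAlgebra.of ℚ G g) *
        (β * MonoidAlgebra.of ℚ G g⁻¹)) := by rw [h1]; noncomm_ring
    _ = MonoidAlgebra.of ℚ G g * α * MonoidAlgebra.of ℚ G g⁻¹ *
        (MonoidAlgebra.of ℚ G g * β * MonoidAlgebra.of ℚ G g⁻¹) := by noncomm_ring

/-- the fixed points of the conjugation action of (members of) `C` on the center of the
component `ℚB·e`, as a non-unital subring of `ℚG`. -/
def fixedCenter (B : Subgroup G) (e : MonoidAlgebra ℚ G) (C : Subgroup G) :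
    NonUnitalSubring (MonoidAlgebra ℚ G) where
  carrier := {α | α ∈ centerCompNUS B e ∧ ∀ x ∈ C, conjEl x α = α}
  zero_mem' := ⟨zero_mem _, fun x _ => by unfold conjEl; rw [mul_zero, zero_mul]⟩
  add_mem' := by
    rintro a b ⟨ha, ha'⟩ ⟨hb, hb'⟩
    exact ⟨add_mem ha hb, fun x hx => by rw [conjEl_add, ha' x hx, hb' x hx]⟩
  neg_mem' := by
    rintro a ⟨ha, ha'⟩
    refine ⟨neg_mem ha, fun x hx => ?_⟩
    have : conjEl x (-a) = - conjEl x a := by unfold conjEl; rw [mul_neg, neg_mul]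
    rw [this, ha' x hx]
  mul_mem' := by
    rintro a b ⟨ha, ha'⟩ ⟨hb, hb'⟩
    exact ⟨mul_mem ha hb, fun x hx => by rw [conjEl_mul, ha' x hx, hb' x hx]⟩

/-- `(H,K)` is a Shoda pair of `G`. -/
def IsShodaPair (H K : Subgroup G) : Prop :=
  K ≤ H ∧ (∀ h ∈ H, ∀ x ∈ K, h * x * h⁻¹ ∈ K) ∧
    (∃ h ∈ H, ∀ x ∈ H, ∃ n : ℤ, (h ^ n)⁻¹ * x ∈ K) ∧
    ∀ g : G, (∀ h ∈ H, h⁻¹ * g⁻¹ * h * g ∈ H → h⁻¹ * g⁻¹ * h * g ∈ K) → g ∈ H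

/-- `c` is a strong inductive chain from `H` to `G` (with respect to the linear
character `lam` of `H`). -/
def IsStrongInductiveChain (H : Subgroup G) (lam : H →* ℂ) {n : ℕ}
    (c : Fin (n + 1) → Subgroup G) : Prop :=
  c 0 = H ∧ c (Fin.last n) = ⊤ ∧ Monotone c ∧
    ∀ i : Fin n,
      NormalIn (c i.castSucc) (cen (c i.succ) (eQ lam (c i.castSucc))) ∧
      ∀ x ∈ c i.succ, ∀ y ∈ c i.succ,
        conjEl x (eQ lam (c i.castSucc)) ≠ conjEl y (eQ lam (c i.castSucc)) →
        conjEl x (eQ lam (c i.castSucc)) * conjEl y (eQ lam (c i.castSucc)) = 0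

/-- `(H,K)` is a generalized strong Shoda pair of `G`, witnessed by the linear character
`lam` of `H` with kernel `K`. -/
def IsGSSPwith (H K : Subgroup G) (lam : H →* ℂ) : Prop :=
  IsShodaPair H K ∧ IsLinCharKer H K lam ∧
    ∃ (n : ℕ) (c : Fin (n + 1) → Subgroup G), IsStrongInductiveChain H lam c

/-- `(H,K)` is a generalized strong Shoda pair of `G`. -/
def IsGSSP (H K : Subgroup G) : Prop :=
  ∃ lam : H →* ℂ, IsGSSPwith H K lam

/-- `χ` is an irreducible (complex) character of `Γ`. -/
def IsIrrChar (Γ : Type) [Group Γ] (χ : Γ → ℂ) : Prop :=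
  ∃ V : FDRep ℂ Γ, CategoryTheory.Simple V ∧ V.character = χ

/-- `Γ` is a monomial group. -/
def IsMonomialGroup (Γ : Type) [Group Γ] [Fintype Γ] : Prop :=
  ∀ χ : Γ → ℂ, IsIrrChar Γ χ →
    ∃ (N : Subgroup Γ) (lam : N →* ℂ), χ = indChar N fun h => lam h

/-- `G` is a generalized strongly monomial group. -/
def IsGenStronglyMonomial (G : Type) [Group G] [Fintype G] : Prop :=
  ∀ χ : G → ℂ, IsIrrChar G χ →
    ∃ (H K : Subgroup G) (lam : H →* ℂ), IsGSSPwith H K lam ∧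
      χ = indChar H fun h => lam h

/-- `A` is a subnormal subgroup of `G`. -/
def Subnormal (A : Subgroup G) : Prop :=
  ∃ (n : ℕ) (c : Fin (n + 1) → Subgroup G), c 0 = A ∧ c (Fin.last n) = ⊤ ∧
    ∀ i : Fin n, NormalIn (c i.castSucc) (c i.succ)

/-- the Bass unit (Bass cyclic unit) `u_{k,m}(g)`, written in `ℚG` (it has integral
coefficients when `k^m ≡ 1 mod |g|`). -/
def bassQ (g : G) (k m : ℕ) : MonoidAlgebra ℚ G :=
  (∑ i ∈ Finset.range k, MonoidAlgebra.of ℚ G g ^ i) ^ m +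
    (((1 : ℚ) - (k : ℚ) ^ m) / (orderOf g : ℚ)) •
      ∑ i ∈ Finset.range (orderOf g), MonoidAlgebra.of ℚ G g ^ i

/-- the integral group ring `ℤB`, as a subring of `ℚG`. -/
def intRing (B : Subgroup G) : Subring (MonoidAlgebra ℚ G) :=
  Subring.closure (Set.range fun b : B => MonoidAlgebra.of ℚ G (b : G))

/-- `α` is a unit of the integral group ring `ℤB`. -/
def IsUnitOfZ (B : Subgroup G) (α : MonoidAlgebra ℚ G) : Prop :=
  α ∈ intRing B ∧ ∃ β ∈ intRing B, α * β = 1 ∧ β * α = 1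

/-- `Z(U(ℤB))`: the group of central units of `ℤB`, as a subgroup of `(ℚG)ˣ`. -/
def centralZUnits (B : Subgroup G) : Subgroup (MonoidAlgebra ℚ G)ˣ where
  carrier := {u | (u : MonoidAlgebra ℚ G) ∈ intRing B ∧
    ((u⁻¹ : (MonoidAlgebra ℚ G)ˣ) : MonoidAlgebra ℚ G) ∈ intRing B ∧
    ∀ x ∈ intRing B, (u : MonoidAlgebra ℚ G) * x = x * u}
  one_mem' := ⟨one_mem _, by rw [inv_one]; exact ⟨one_mem _, fun x _ => by rw [Units.val_one, one_mul, mul_one]⟩⟩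
  mul_mem' := by
    rintro a b ⟨ha1, ha2, ha3⟩ ⟨hb1, hb2, hb3⟩
    refine ⟨by rw [Units.val_mul]; exact mul_mem ha1 hb1, ?_, ?_⟩
    · rw [mul_inv_rev, Units.val_mul]; exact mul_mem hb2 ha2
    · intro x hx
      rw [Units.val_mul, mul_assoc, hb3 x hx, ← mul_assoc, ha3 x hx, mul_assoc]
  inv_mem' := by
    rintro a ⟨ha1, ha2, ha3⟩
    refine ⟨ha2, by rw [inv_inv]; exact ha1, fun x hx => ?_⟩
    exact Commute.units_inv_left (ha3 x hx)

/-- the element `1 - M̂ + u_{k,m}(g)·M̂` of `ℚG`. -/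
def genBassElt (M : Subgroup G) (g : G) (k m : ℕ) : MonoidAlgebra ℚ G :=
  1 - hat M + bassQ g k m * hat M

/-- `u` is a generalized Bass unit of `ℤB` based on some `g ∈ B` and the subgroup `M`:
it is the minimal positive power of `1 - M̂ + u_{k,m}(g)·M̂` which is a unit of `ℤB`. -/
def IsGenBassUnitOf (B M : Subgroup G) (u : (MonoidAlgebra ℚ G)ˣ) : Prop :=
  ∃ g ∈ B, ∃ k m nn : ℕ, 0 < k ∧ 0 < m ∧ 0 < nn ∧ k ^ m ≡ 1 [MOD orderOf g] ∧
    (u : MonoidAlgebra ℚ G) = genBassElt M g k m ^ nn ∧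
    IsUnitOfZ B (u : MonoidAlgebra ℚ G) ∧
    ∀ j : ℕ, 0 < j → j < nn → ¬ IsUnitOfZ B (genBassElt M g k m ^ j)

/-- `u` is a Bass unit of `ℤG`. -/
def IsBassUnit (u : (MonoidAlgebra ℚ G)ˣ) : Prop :=
  ∃ (g : G) (k m : ℕ), 0 < k ∧ 0 < m ∧ k ^ m ≡ 1 [MOD orderOf g] ∧
    (u : MonoidAlgebra ℚ G) = bassQ g k m

/-- a (finitely generated) group `M` has (torsion-free) rank `r` iff it contains a free
abelian subgroup of rank `r` of finite index. -/
def HasRank (M : Type*) [Group M] (r : ℕ) : Prop :=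
  ∃ f : Multiplicative (Fin r → ℤ) →* M, Function.Injective f ∧ f.range.index ≠ 0

/-- `(H,K)` realizes the primitive central idempotent `e` of `ℚG`. -/
def RealizesIdem (H K : Subgroup G) (e : MonoidAlgebra ℚ G) : Prop :=
  ∃ lam : H →* ℂ, IsLinCharKer H K lam ∧ eQ lam ⊤ = e

/-- two pairs of subgroups realize the same primitive central idempotent of `ℚG`. -/
def SameIdem (p q : Subgroup G × Subgroup G) : Prop :=
  ∃ e, RealizesIdem p.1 p.2 e ∧ RealizesIdem q.1 q.2 e

/-- `S` is a complete and irredundant set of generalized strong Shoda pairs of `G`. -/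
def IsCompleteIrredundantGSSP (S : Finset (Subgroup G × Subgroup G)) : Prop :=
  (∀ p ∈ S, IsGSSP p.1 p.2) ∧
  (∀ H K : Subgroup G, IsGSSP H K → ∃ q ∈ S, SameIdem (H, K) q) ∧
  (∀ p ∈ S, ∀ q ∈ S, SameIdem p q → p = q)

/-- the center of the component `ℚG·e` is a totally real field: every embedding of it
into `ℂ` has real image. -/
def IsTotallyRealCenter (B : Subgroup G) (e : MonoidAlgebra ℚ G) : Prop :=
  ∀ f : centerCompNUS B e →ₙ+* ℂ, f ≠ 0 → ∀ α, (f α).im = 0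

/-- `T` is a right transversal of `C` in `B`. -/
def IsRightTransversal (C B : Subgroup G) (T : Finset G) : Prop :=
  (T : Set G) ⊆ (B : Set G) ∧ ∀ b ∈ B, ∃! t, t ∈ T ∧ b * t⁻¹ ∈ C

/-- `x^g = g⁻¹ x g`. -/
def zconj (g : G) (α : MonoidAlgebra ℚ G) : MonoidAlgebra ℚ G :=
  MonoidAlgebra.of ℚ G g⁻¹ * α * MonoidAlgebra.of ℚ G g

/-- `∏_{c ∈ C} α^c`. -/
def innerProd (C : Subgroup G) (α : MonoidAlgebra ℚ G) : MonoidAlgebra ℚ G :=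
  ((Finset.univ : Finset C).toList.map fun c => zconj (c : G) α).prod

/-- `∏_{t ∈ T} α^t`. -/
def outerProd (T : Finset G) (α : MonoidAlgebra ℚ G) : MonoidAlgebra ℚ G :=
  (T.toList.map fun t => zconj t α).prod

/-- the iterated construction `z^{N}(u)` along a list of pairs (centralizer, transversal). -/
def zIterAux : List (Subgroup G × Finset G) → MonoidAlgebra ℚ G → MonoidAlgebra ℚ G
  | [], α => α
  | p :: rest, α => zIterAux rest (outerProd p.2 (innerProd p.1 α))

/-- the iterated construction `c^{N}(u)` along a list of transversals. -/
def cIterAux : List (Finset G) → MonoidAlgebra ℚ G → MonoidAlgebra ℚ G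
  | [], α => α
  | T :: rest, α => cIterAux rest (outerProd T α)



section Aux
open CategoryTheory

variable {Γ : Type} [Group Γ] [Fintype Γ]

lemma extChar_zero (χ : Γ → ℂ) : extChar χ 0 = 0 := by simp [extChar]

lemma extChar_add (χ : Γ → ℂ) (a b : MonoidAlgebra ℚ Γ) :
    extChar χ (a + b) = extChar χ a + extChar χ b := by
  unfold extChar
  rw [← Finset.sum_add_distrib]
  refine Finset.sum_congr rfl fun g _ => ?_
  rw [MonoidAlgebra.coeff_add, Finsupp.add_apply]; push_cast; ring

lemma extChar_one (χ : Γ → ℂ) : extChar χ 1 = χ 1 := by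
  simp only [extChar, MonoidAlgebra.one_def]
  rw [Finset.sum_eq_single (1 : Γ)]
  · simp [MonoidAlgebra.coeff_single]
  · intro g _ hg; simp [MonoidAlgebra.coeff_single, Finsupp.single_apply, Ne.symm hg]
  · simp

lemma monalg_finite : Module.Finite ℚ (MonoidAlgebra ℚ Γ) :=
  inferInstance

lemma dim_lt {a b c : MonoidAlgebra ℚ Γ}
    (hb : ∀ α, b * α = α * b) (haa : a * a = a) (hbb : b * b = b)
    (hab : a * b = 0) (habc : a + b = c) (hb0 : b ≠ 0) :
    Module.finrank ℚ (LinearMap.range (LinearMap.mulLeft ℚ a)) <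
      Module.finrank ℚ (LinearMap.range (LinearMap.mulLeft ℚ c)) := by
  haveI := monalg_finite (Γ := Γ)
  set Ma := LinearMap.range (LinearMap.mulLeft ℚ a) with hMa
  set Mb := LinearMap.range (LinearMap.mulLeft ℚ b) with hMb
  set Mc := LinearMap.range (LinearMap.mulLeft ℚ c) with hMc
  have hba : b * a = 0 := by rw [hb a, hab]
  have hca : c * a = a := by rw [← habc, add_mul, haa, hba, add_zero]
  have hcb : c * b = b := by rw [← habc, add_mul, hbb, hab, zero_add]
  have haMc : Ma ≤ Mc := by
    rintro z ⟨α, rfl⟩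
    exact ⟨a * α, by simp only [LinearMap.mulLeft_apply]; rw [← mul_assoc, hca]⟩
  have hbMc : Mb ≤ Mc := by
    rintro z ⟨α, rfl⟩
    exact ⟨b * α, by simp only [LinearMap.mulLeft_apply]; rw [← mul_assoc, hcb]⟩
  have hdisj : Ma ⊓ Mb = ⊥ := by
    rw [Submodule.eq_bot_iff]
    rintro z ⟨⟨α, hα⟩, ⟨β, hβ⟩⟩
    simp only [LinearMap.mulLeft_apply] at hα hβ
    have h1 : a * z = z := by rw [← hα, ← mul_assoc, haa]
    have h2 : a * z = 0 := by rw [← hβ, ← mul_assoc, hab, zero_mul]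
    rw [← h1, h2]
  have hbmem : b ∈ Mb := ⟨1, by simp⟩
  have hbpos : 0 < Module.finrank ℚ Mb := by
    rw [Module.finrank_pos_iff]
    exact nontrivial_of_ne ⟨b, hbmem⟩ 0 fun h => hb0 (by simpa using congrArg Subtype.val h)
  have hsum : Module.finrank ℚ Ma + Module.finrank ℚ Mb = Module.finrank ℚ ↥(Ma ⊔ Mb) := by
    have := Submodule.finrank_sup_add_finrank_inf_eq Ma Mb
    rw [hdisj] at this
    simpa using this.symm
  have hle : Module.finrank ℚ ↥(Ma ⊔ Mb) ≤ Module.finrank ℚ Mc :=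
    Submodule.finrank_mono (sup_le haMc hbMc)
  omega

lemma exists_pci (χ : Γ → ℂ) (h1 : χ 1 ≠ 0) :
    ∃ e : MonoidAlgebra ℚ Γ, IsPCI e ∧ extChar χ e ≠ 0 := by
  haveI := monalg_finite (Γ := Γ)
  suffices H : ∀ d : ℕ, ∀ c : MonoidAlgebra ℚ Γ,
      Module.finrank ℚ (LinearMap.range (LinearMap.mulLeft ℚ c)) ≤ d →
      (∀ α, c * α = α * c) → c * c = c → extChar χ c ≠ 0 →
      ∃ e, IsPCI e ∧ extChar χ e ≠ 0 by
    exact H _ 1 le_rfl (fun α => by rw [one_mul, mul_one]) (one_mul 1) (by rwa [extChar_one])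
  intro d
  induction d with
  | zero =>
    intro c hle hcen hid hval
    exfalso
    have hc0 : c ≠ 0 := by rintro rfl; exact hval (extChar_zero χ)
    have : 0 < Module.finrank ℚ (LinearMap.range (LinearMap.mulLeft ℚ c)) := by
      rw [Module.finrank_pos_iff]
      exact nontrivial_of_ne ⟨c, ⟨1, by simp⟩⟩ 0 fun h => hc0 (by simpa using congrArg Subtype.val h)
    omega
  | succ d IH =>
    intro c hle hcen hid hval
    by_cases hprim : ∀ a b : MonoidAlgebra ℚ Γ, (∀ α, a * α = α * a) → (∀ α, b * α = α * b) →
        a * a = a → b * b = b → a * b = 0 → a + b = c → a = 0 ∨ b = 0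
    · exact ⟨c, ⟨hcen, hid, fun h => hval (h ▸ extChar_zero χ), hprim⟩, hval⟩
    · push_neg at hprim
      obtain ⟨a, b, ha, hb, haa, hbb, hab, habc, ha0, hb0⟩ := hprim
      have hba : b * a = 0 := by rw [hb a, hab]
      have hsum : extChar χ a + extChar χ b = extChar χ c := by rw [← extChar_add, habc]
      by_cases hva : extChar χ a = 0
      · have hvb : extChar χ b ≠ 0 := by
          intro h; rw [hva, h, zero_add] at hsum; exact hval hsum.symm
        refine IH b ?_ hb hbb hvb
        have := dim_lt (a := b) (b := a) (c := c) ha hbb haa hba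
          (by rw [add_comm]; exact habc) ha0
        omega
      · refine IH a ?_ ha haa hva
        have := dim_lt (a := a) (b := b) (c := c) hb haa hbb hab habc hb0
        omega



/-- coefficient extension `ℚΓ → ℂΓ`. -/
def iot (Γ : Type) [Group Γ] : MonoidAlgebra ℚ Γ →ₐ[ℚ] MonoidAlgebra ℂ Γ :=
  MonoidAlgebra.lift ℚ (MonoidAlgebra ℂ Γ) Γ (MonoidAlgebra.of ℂ Γ)

lemma iot_apply {Γ : Type} [Group Γ] (α : MonoidAlgebra ℚ Γ) (g : Γ) :
    (iot Γ α).coeff g = (α.coeff g : ℂ) := by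
  induction α using MonoidAlgebra.induction_linear with
  | zero => simp
  | add a b ha hb => rw [map_add, MonoidAlgebra.coeff_add, Finsupp.add_apply, ha, hb, MonoidAlgebra.coeff_add, Finsupp.add_apply]; push_cast; ring
  | single a b =>
    rw [iot, MonoidAlgebra.lift_single, MonoidAlgebra.coeff_single, Finsupp.single_apply]
    simp only [MonoidAlgebra.of_apply]
    rw [MonoidAlgebra.coeff_smul, Finsupp.smul_apply, MonoidAlgebra.coeff_single, Finsupp.single_apply]
    split <;> simp [Rat.smul_def]

lemma iot_of {Γ : Type} [Group Γ] (g : Γ) :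
    iot Γ (MonoidAlgebra.of ℚ Γ g) = MonoidAlgebra.of ℂ Γ g :=
  MonoidAlgebra.lift_of _ _

lemma traceAux (V : FDRep ℂ Γ) (α : MonoidAlgebra ℂ Γ) (f : V →ₗ[ℂ] V) :
    LinearMap.trace ℂ V ((Representation.asAlgebraHom V.ρ α) * f)
      = ∑ g : Γ, α.coeff g * LinearMap.trace ℂ V (V.ρ g * f) := by
  induction α using MonoidAlgebra.induction_linear with
  | zero => simp
  | add a b ha hb => simp only [map_add, add_mul, MonoidAlgebra.coeff_add, Finsupp.add_apply, ha, hb, add_mul,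
      Finset.sum_add_distrib]
  | single a b =>
    rw [Representation.asAlgebraHom_single, smul_mul_assoc, map_smul, Finset.sum_eq_single a]
    · simp [MonoidAlgebra.coeff_single, Finsupp.single_apply, smul_eq_mul]
    · intro g _ hg; simp [MonoidAlgebra.coeff_single, Finsupp.single_apply, Ne.symm hg]
    · simp

lemma char_one_ne_zero (V : FDRep ℂ Γ) [CategoryTheory.Simple V] : V.character 1 ≠ 0 := by
  rw [FDRep.char_one]
  rw [Nat.cast_ne_zero]
  intro h0
  have hs : Subsingleton V := (Module.finrank_zero_iff (R := ℂ) (M := V)).mp h0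
  apply CategoryTheory.id_nonzero V
  apply Action.Hom.ext
  apply FGModuleCat.hom_ext
  apply LinearMap.ext
  intro v
  exact @Subsingleton.elim _ hs _ _

lemma comm_all {c : MonoidAlgebra ℚ Γ}
    (h : ∀ g : Γ, c * MonoidAlgebra.of ℚ Γ g = MonoidAlgebra.of ℚ Γ g * c)
    (β : MonoidAlgebra ℚ Γ) : c * β = β * c := by
  have hβ : β = ∑ g : Γ, β.coeff g • MonoidAlgebra.of ℚ Γ g := by
    ext m
    rw [MonoidAlgebra.coeff_sum, Finsupp.finset_sum_apply, Finset.sum_eq_single m]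
    · simp [MonoidAlgebra.of_apply, MonoidAlgebra.coeff_single, Finsupp.single_apply]
    · intro g _ hg; simp [MonoidAlgebra.of_apply, MonoidAlgebra.coeff_single, Finsupp.single_apply, hg]
    · simp
  rw [hβ, Finset.mul_sum, Finset.sum_mul]
  refine Finset.sum_congr rfl fun g _ => ?_
  rw [mul_smul_comm, smul_mul_assoc, h g]

/-- The key structural lemma: the coefficients of the complex central element
`∑ n, χ(n⁻¹) n` decompose into rational central elements absorbed by `e`. -/
lemma key (χ : Γ → ℂ) (hχ : IsIrrChar Γ χ) (e : MonoidAlgebra ℚ Γ)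
    (hcen : ∀ α, e * α = α * e) (hid : e * e = e) (hval : extChar χ e ≠ 0) :
    ∃ (d : ℕ) (bb : Fin d → ℂ) (γ : Fin d → MonoidAlgebra ℚ Γ),
      (∀ i, γ i * e = γ i) ∧ (∀ i (β : MonoidAlgebra ℚ Γ), γ i * β = β * γ i) ∧
      (∀ m : Γ, (∑ i, bb i * ((γ i).coeff m : ℂ)) = χ m⁻¹) := by
  obtain ⟨V, hs, hVχ⟩ := hχ
  haveI := hs
  subst hVχ
  set χ := V.character with hχdef
  -- Schur: `iot e` acts as the identity on `V`.
  have hcommC : ∀ g : Γ, iot Γ e * MonoidAlgebra.of ℂ Γ g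
      = MonoidAlgebra.of ℂ Γ g * iot Γ e := by
    intro g
    have := hcen (MonoidAlgebra.of ℚ Γ g)
    have h2 := congrArg (iot Γ) this
    rwa [map_mul, map_mul, iot_of] at h2
  have hAcomm : ∀ g : Γ, (Representation.asAlgebraHom V.ρ (iot Γ e)) * V.ρ g
      = V.ρ g * Representation.asAlgebraHom V.ρ (iot Γ e) := by
    intro g
    rw [← Representation.asAlgebraHom_of V.ρ g, ← map_mul, ← map_mul, hcommC]
  let θ : V ⟶ V := ⟨FGModuleCat.ofHom (Representation.asAlgebraHom V.ρ (iot Γ e)), fun g => by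
    have := hAcomm g
    rw [Module.End.mul_eq_comp, Module.End.mul_eq_comp] at this
    apply FGModuleCat.hom_ext
    exact this⟩
  obtain ⟨c, hc⟩ := CategoryTheory.endomorphism_simple_eq_smul_id (𝕜 := ℂ) θ
  have hL : (c • LinearMap.id : V →ₗ[ℂ] V) = Representation.asAlgebraHom V.ρ (iot Γ e) :=
    congrArg (fun f : V ⟶ V => f.hom.hom.hom) hc
  have htr : ∀ f : V →ₗ[ℂ] V,
      LinearMap.trace ℂ V ((Representation.asAlgebraHom V.ρ (iot Γ e)) * f)
        = ∑ g : Γ, (e.coeff g : ℂ) * LinearMap.trace ℂ V (V.ρ g * f) := by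
    intro f
    rw [traceAux]
    exact Finset.sum_congr rfl fun g _ => by rw [iot_apply]
  have hii : (LinearMap.id : V →ₗ[ℂ] V) * LinearMap.id = LinearMap.id := by
    apply LinearMap.ext; intro v; simp [Module.End.mul_apply]
  have hd0 : V.character 1 ≠ 0 := char_one_ne_zero V
  have hfr0 : ((Module.finrank ℂ V : ℂ)) ≠ 0 := by rwa [FDRep.char_one] at hd0
  have tL : LinearMap.trace ℂ V (Representation.asAlgebraHom V.ρ (iot Γ e))
      = c * (Module.finrank ℂ V : ℂ) := by
    rw [← hL, map_smul, smul_eq_mul, LinearMap.trace_id]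
  have h1 : c * (Module.finrank ℂ V : ℂ) = extChar V.character e := by
    have t := htr 1
    rw [mul_one] at t
    rw [← tL] at *
    rw [t]
    unfold extChar
    refine Finset.sum_congr rfl fun g _ => ?_
    rw [mul_one]
    rfl
  have hLL : ((c * c) • LinearMap.id : V →ₗ[ℂ] V) = (c • LinearMap.id : V →ₗ[ℂ] V) := by
    have h2 : (c • LinearMap.id : V →ₗ[ℂ] V) * (c • LinearMap.id) = c • LinearMap.id := by
      rw [hL, ← map_mul, ← map_mul, hid]
    rw [← h2, smul_mul_smul_comm, hii]
  have hcc : c * c = c := by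
    have h3 := congrArg (LinearMap.trace ℂ V) hLL
    rw [map_smul, map_smul, LinearMap.trace_id, smul_eq_mul, smul_eq_mul] at h3
    exact mul_right_cancel₀ hfr0 h3
  have hcne : c ≠ 0 := by
    intro h0
    rw [h0, zero_mul] at h1
    exact hval h1.symm
  have hc1 : c = 1 := mul_left_cancel₀ hcne (by rw [hcc, mul_one])
  have hSchur : Representation.asAlgebraHom V.ρ (iot Γ e) = LinearMap.id := by
    rw [← hL, hc1, one_smul]
  -- the complex element `F1 = ∑ n, χ(n⁻¹) n`
  set F1 : MonoidAlgebra ℂ Γ := ∑ n : Γ, MonoidAlgebra.single n (V.character n⁻¹) with hF1def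
  have F1_apply : ∀ m : Γ, F1.coeff m = V.character m⁻¹ := by
    intro m
    rw [hF1def, MonoidAlgebra.coeff_sum, Finsupp.finset_sum_apply, Finset.sum_eq_single m]
    · simp [MonoidAlgebra.coeff_single]
    · intro g _ hg; simp [MonoidAlgebra.coeff_single, Finsupp.single_apply, hg]
    · simp
  have hF1e : F1 * iot Γ e = F1 := by
    ext m
    have step1 : (F1 * iot Γ e).coeff m = ∑ n : Γ, V.character n⁻¹ * (iot Γ e).coeff (n⁻¹ * m) := by
      rw [hF1def, Finset.sum_mul, MonoidAlgebra.coeff_sum, Finsupp.finset_sum_apply]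
      exact Finset.sum_congr rfl fun n _ => by rw [MonoidAlgebra.coeff_single_mul_apply]
    have step2 : ∑ n : Γ, V.character n⁻¹ * (iot Γ e).coeff (n⁻¹ * m)
        = ∑ b : Γ, V.character (b * m⁻¹) * (iot Γ e).coeff b := by
      apply Fintype.sum_equiv ((Equiv.inv Γ).trans (Equiv.mulRight m))
      intro b
      simp only [Equiv.trans_apply, Equiv.inv_apply, Equiv.coe_mulRight]
      simp [mul_assoc]
    have step3 : ∑ b : Γ, V.character (b * m⁻¹) * (iot Γ e).coeff b = V.character m⁻¹ := by
      have t := htr (V.ρ m⁻¹)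
      rw [hSchur] at t
      have hidm : (LinearMap.id : V →ₗ[ℂ] V) * V.ρ m⁻¹ = V.ρ m⁻¹ := by
        apply LinearMap.ext; intro v; simp [Module.End.mul_apply]
      rw [hidm] at t
      calc ∑ b : Γ, V.character (b * m⁻¹) * (iot Γ e).coeff b
          = ∑ b : Γ, (e.coeff b : ℂ) * LinearMap.trace ℂ V (V.ρ b * V.ρ m⁻¹) := by
            refine Finset.sum_congr rfl fun b _ => ?_
            rw [iot_apply, mul_comm, ← map_mul]
            rfl
        _ = LinearMap.trace ℂ V (V.ρ m⁻¹) := by rw [← t]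
        _ = V.character m⁻¹ := rfl
    rw [step1, step2, step3, F1_apply]
  have hF1comm : ∀ g : Γ, F1 * MonoidAlgebra.of ℂ Γ g = MonoidAlgebra.of ℂ Γ g * F1 := by
    intro g
    ext m
    simp only [MonoidAlgebra.of_apply, MonoidAlgebra.coeff_mul_single_apply,
      MonoidAlgebra.coeff_single_mul_apply, one_mul, mul_one, F1_apply, mul_inv_rev, inv_inv]
    exact FDRep.char_mul_comm V m⁻¹ g
  -- decompose `F1` over a rational basis of the span of the character values
  set W : Submodule ℚ ℂ := Submodule.span ℚ (Set.range V.character) with hWdef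
  haveI : FiniteDimensional ℚ W := FiniteDimensional.span_of_finite ℚ (Set.finite_range _)
  have hmem : ∀ m : Γ, V.character m ∈ W := fun m => Submodule.subset_span ⟨m, rfl⟩
  set d : ℕ := Module.finrank ℚ W with hddef
  set b : Module.Basis (Fin d) ℚ W := Module.finBasis ℚ W with hbdef
  set bb : Fin d → ℂ := fun i => ((b i : W) : ℂ) with hbbdef
  set γ : Fin d → MonoidAlgebra ℚ Γ :=
    fun i => ∑ n : Γ, MonoidAlgebra.single n (b.repr ⟨V.character n⁻¹, hmem n⁻¹⟩ i) with hγdef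
  have γ_apply : ∀ i m, (γ i).coeff m = b.repr ⟨V.character m⁻¹, hmem m⁻¹⟩ i := by
    intro i m
    rw [hγdef]
    rw [MonoidAlgebra.coeff_sum, Finsupp.finset_sum_apply, Finset.sum_eq_single m]
    · simp [MonoidAlgebra.coeff_single]
    · intro g _ hg; simp [MonoidAlgebra.coeff_single, Finsupp.single_apply, hg]
    · simp
  have hcoe : ∀ w : W, ∑ i, ((b.repr w i : ℚ) : ℂ) * bb i = (w : ℂ) := by
    intro w
    have h0 : ((∑ i, b.repr w i • b i : W) : ℂ) = (w : ℂ) := by rw [b.sum_repr]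
    rw [← h0, Submodule.coe_sum]
    refine Finset.sum_congr rfl fun i _ => ?_
    rw [Submodule.coe_smul, Rat.smul_def]
  have hdecomp : ∀ m : Γ, (∑ i, bb i * ((γ i).coeff m : ℂ)) = V.character m⁻¹ := by
    intro m
    calc ∑ i, bb i * ((γ i).coeff m : ℂ)
        = ∑ i, ((b.repr ⟨V.character m⁻¹, hmem m⁻¹⟩ i : ℚ) : ℂ) * bb i := by
          refine Finset.sum_congr rfl fun i _ => ?_
          rw [γ_apply, mul_comm]
      _ = ((⟨V.character m⁻¹, hmem m⁻¹⟩ : W) : ℂ) := hcoe _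
      _ = V.character m⁻¹ := rfl
  have hindep : ∀ q : Fin d → ℚ, (∑ i, bb i * (q i : ℂ)) = 0 → ∀ i, q i = 0 := by
    intro q hq
    have h0 : (∑ i, q i • b i : W) = 0 := by
      have hcoe0 : ((∑ i, q i • b i : W) : ℂ) = 0 := by
        rw [Submodule.coe_sum, ← hq]
        refine Finset.sum_congr rfl fun i _ => ?_
        rw [Submodule.coe_smul, Rat.smul_def, mul_comm]
      exact_mod_cast Subtype.ext hcoe0
    exact Fintype.linearIndependent_iff.mp b.linearIndependent q h0
  have hF1dec : F1 = ∑ i, bb i • iot Γ (γ i) := by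
    ext m
    rw [F1_apply, MonoidAlgebra.coeff_sum, Finsupp.finset_sum_apply, ← hdecomp m]
    refine Finset.sum_congr rfl fun i _ => ?_
    rw [MonoidAlgebra.coeff_smul, Finsupp.smul_apply, iot_apply, smul_eq_mul]
  -- each rational component is absorbed by `e`
  have hγe : ∀ i, γ i * e = γ i := by
    have hz : ∑ i, bb i • iot Γ (γ i * e - γ i) = 0 := by
      calc ∑ i, bb i • iot Γ (γ i * e - γ i)
          = ∑ i, (bb i • iot Γ (γ i) * iot Γ e - bb i • iot Γ (γ i)) := by
            refine Finset.sum_congr rfl fun i _ => ?_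
            rw [map_sub, map_mul, smul_sub, smul_mul_assoc]
        _ = (∑ i, bb i • iot Γ (γ i)) * iot Γ e - ∑ i, bb i • iot Γ (γ i) := by
            rw [Finset.sum_sub_distrib, Finset.sum_mul]
        _ = F1 * iot Γ e - F1 := by rw [← hF1dec]
        _ = 0 := by rw [hF1e, sub_self]
    intro i
    have hcomp : ∀ m, (γ i * e - γ i).coeff m = 0 := by
      intro m
      refine hindep (fun j => (γ j * e - γ j).coeff m) ?_ i
      have := Finsupp.ext_iff.mp (congrArg MonoidAlgebra.coeff hz) m
      rw [MonoidAlgebra.coeff_sum, Finsupp.finset_sum_apply, MonoidAlgebra.coeff_zero, Finsupp.zero_apply] at this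
      rw [← this]
      refine Finset.sum_congr rfl fun j _ => ?_
      rw [MonoidAlgebra.coeff_smul, Finsupp.smul_apply, iot_apply, smul_eq_mul]
    have : γ i * e - γ i = 0 := MonoidAlgebra.ext (Finsupp.ext fun m => hcomp m)
    rw [sub_eq_zero] at this
    exact this
  -- each rational component is central
  have hγg : ∀ i g, γ i * MonoidAlgebra.of ℚ Γ g = MonoidAlgebra.of ℚ Γ g * γ i := by
    have hz : ∀ g : Γ, ∑ i, bb i • iot Γ (γ i * MonoidAlgebra.of ℚ Γ g
        - MonoidAlgebra.of ℚ Γ g * γ i) = 0 := by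
      intro g
      calc ∑ i, bb i • iot Γ (γ i * MonoidAlgebra.of ℚ Γ g - MonoidAlgebra.of ℚ Γ g * γ i)
          = ∑ i, (bb i • iot Γ (γ i) * MonoidAlgebra.of ℂ Γ g
              - MonoidAlgebra.of ℂ Γ g * (bb i • iot Γ (γ i))) := by
            refine Finset.sum_congr rfl fun i _ => ?_
            rw [map_sub, map_mul, map_mul, iot_of, smul_sub, smul_mul_assoc, mul_smul_comm]
        _ = (∑ i, bb i • iot Γ (γ i)) * MonoidAlgebra.of ℂ Γ g
            - MonoidAlgebra.of ℂ Γ g * ∑ i, bb i • iot Γ (γ i) := by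
            rw [Finset.sum_sub_distrib, Finset.sum_mul, Finset.mul_sum]
        _ = F1 * MonoidAlgebra.of ℂ Γ g - MonoidAlgebra.of ℂ Γ g * F1 := by rw [← hF1dec]
        _ = 0 := by rw [hF1comm g, sub_self]
    intro i g
    have hcomp : ∀ m, (γ i * MonoidAlgebra.of ℚ Γ g - MonoidAlgebra.of ℚ Γ g * γ i).coeff m = 0 := by
      intro m
      refine hindep (fun j => (γ j * MonoidAlgebra.of ℚ Γ g
        - MonoidAlgebra.of ℚ Γ g * γ j).coeff m) ?_ i
      have := Finsupp.ext_iff.mp (congrArg MonoidAlgebra.coeff (hz g)) m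
      rw [MonoidAlgebra.coeff_sum, Finsupp.finset_sum_apply, MonoidAlgebra.coeff_zero, Finsupp.zero_apply] at this
      rw [← this]
      refine Finset.sum_congr rfl fun j _ => ?_
      rw [MonoidAlgebra.coeff_smul, Finsupp.smul_apply, iot_apply, smul_eq_mul]
    have : γ i * MonoidAlgebra.of ℚ Γ g - MonoidAlgebra.of ℚ Γ g * γ i = 0 :=
      MonoidAlgebra.ext (Finsupp.ext fun m => hcomp m)
    rw [sub_eq_zero] at this
    exact this
  exact ⟨d, bb, γ, hγe, fun i => comm_all (hγg i), hdecomp⟩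



end Aux

set_option maxHeartbeats 1600000 in
/-- If `N ⊴ C`, `χ` is an irreducible character of `N`, and `x ∈ C`
centralizes `e_ℚ(χ)` and acts on `ℚN e_ℚ(χ)` as an inner automorphism, then `χ^x = χ`. -/
theorem conj_char_eq_of_inner
    (C : Type) [Group C] [Fintype C] (N : Subgroup C) (hN : N.Normal)
    (χ : N → ℂ) (hχ : IsIrrChar N χ) (x : C)
    (hx : MonoidAlgebra.of ℚ C x * emb N (eQchar χ) =
      emb N (eQchar χ) * MonoidAlgebra.of ℚ C x)
    (hinner : ∃ u v : MonoidAlgebra ℚ C,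
      u ∈ compIn N (emb N (eQchar χ)) ∧ v ∈ compIn N (emb N (eQchar χ)) ∧
      u * v = emb N (eQchar χ) ∧ v * u = emb N (eQchar χ) ∧
      ∀ α ∈ compIn N (emb N (eQchar χ)), conjEl x α = u * α * v) :
    ∀ nn : N, χ ⟨x * ↑nn * x⁻¹, hN.conj_mem ↑nn nn.2 x⟩ = χ nn := by
  intro nn
  set e := eQchar χ with hedef
  obtain ⟨V, hs, hVχ⟩ := hχ
  have hχ1 : χ 1 ≠ 0 := by
    haveI := hs
    rw [← hVχ]
    exact char_one_ne_zero V
  have hex : ∃ e', IsPCI e' ∧ extChar χ e' ≠ 0 := exists_pci χ hχ1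
  have he : e = hex.choose := by rw [hedef, eQchar, dif_pos hex]
  obtain ⟨⟨hcen, hid, hne0, hprim⟩, hval⟩ := hex.choose_spec
  rw [← he] at hcen hid hval
  obtain ⟨d, bb, γ, hγe, hγc, hdec⟩ := key χ ⟨V, hs, hVχ⟩ e hcen hid hval
  obtain ⟨u, v, hu, hv, huv, hvu, hact⟩ := hinner
  have hαmem : ∀ i, emb N (γ i) ∈ compIn N (emb N e) := by
    intro i
    have h1 : emb N (γ i) = emb N (γ i) * emb N e := by rw [← map_mul, hγe i]
    rw [h1]
    exact NonUnitalSubring.subset_closure ⟨γ i, rfl⟩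
  have hαcomm : ∀ i, ∀ z ∈ compIn N (emb N e), emb N (γ i) * z = z * emb N (γ i) := by
    intro i z hz
    induction hz using NonUnitalSubring.closure_induction with
    | mem w hw =>
      obtain ⟨β, rfl⟩ := hw
      calc emb N (γ i) * (emb N β * emb N e)
          = emb N (γ i * (β * e)) := by rw [map_mul, map_mul]
        _ = emb N ((β * e) * γ i) := by rw [hγc i (β * e)]
        _ = emb N β * emb N e * emb N (γ i) := by rw [map_mul, map_mul]
    | zero => rw [mul_zero, zero_mul]
    | add w₁ w₂ h₁ h₂ ih₁ ih₂ => rw [mul_add, add_mul, ih₁, ih₂]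
    | neg w h ih => rw [mul_neg, neg_mul, ih]
    | mul w₁ w₂ h₁ h₂ ih₁ ih₂ => rw [← mul_assoc, ih₁, mul_assoc, ih₂, mul_assoc]
  have hfix : ∀ i, conjEl x (emb N (γ i)) = emb N (γ i) := by
    intro i
    rw [hact _ (hαmem i), ← hαcomm i u hu, mul_assoc, huv, ← map_mul, hγe i]
  have hFconj : MonoidAlgebra.of ℂ C x * (∑ i, bb i • iot C (emb N (γ i)))
      * MonoidAlgebra.of ℂ C x⁻¹ = ∑ i, bb i • iot C (emb N (γ i)) := by
    rw [Finset.mul_sum, Finset.sum_mul]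
    refine Finset.sum_congr rfl fun i _ => ?_
    rw [mul_smul_comm, smul_mul_assoc]
    congr 1
    have h2 := congrArg (iot C) (hfix i)
    rw [conjEl, map_mul, map_mul, iot_of, iot_of] at h2
    exact h2
  have hFapply : ∀ n : N, (∑ i, bb i • iot C (emb N (γ i))).coeff ((n : C)) = χ n⁻¹ := by
    intro n
    rw [MonoidAlgebra.coeff_sum, Finsupp.finset_sum_apply, ← hdec n]
    refine Finset.sum_congr rfl fun i _ => ?_
    rw [MonoidAlgebra.coeff_smul, Finsupp.smul_apply, iot_apply, smul_eq_mul]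
    congr 2
    show (Finsupp.mapDomain (N.subtype) (γ i).coeff) (N.subtype n) = (γ i).coeff n
    rw [Finsupp.mapDomain_apply N.subtype_injective]
  set m' : N := ⟨x * ↑nn * x⁻¹, hN.conj_mem ↑nn nn.2 x⟩ with hm'def
  have hkey := Finsupp.ext_iff.mp (congrArg MonoidAlgebra.coeff hFconj) ((m'⁻¹ : N) : C)
  rw [MonoidAlgebra.of_apply, MonoidAlgebra.of_apply, MonoidAlgebra.coeff_mul_single_apply,
    MonoidAlgebra.coeff_single_mul_apply, one_mul, mul_one] at hkey
  have harg : x⁻¹ * (((m'⁻¹ : N) : C) * (x⁻¹)⁻¹) = ((nn⁻¹ : N) : C) := by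
    have h3 : ((m'⁻¹ : N) : C) = (x * ↑nn * x⁻¹)⁻¹ := by
      rw [InvMemClass.coe_inv]
    rw [h3]
    simp [mul_assoc]
  rw [harg, hFapply, hFapply, inv_inv, inv_inv] at hkey
  exact hkey.symm


end PaperGSM
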